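/- Let p ≥ 1 be an integer, let ζ : ℕ → ℝ be a sequence, and define z(n) = Σ_{l=0}^{n} (n!/(n−l)!) · ζ(l). Then for every n ∈ ℕ: Σ_{(l_1,…,l_p) ∈ ℕ^p, l_1+…+l_p ≤ n} ζ(l_1)⋯ζ(l_p) · n!/(n−(l_1+…+l_p))! = n! · Σ_{(k_1,…,k_p) ∈ ℕ^p, k_1+…+k_p ≤ n} (−1)^{k_1+…+k_p+n} · (p−1)^{n−(k_1+…+k_p)} / (k_1!⋯k_p! · (n−(k_1+…+k_p))!) · z(k_1)⋯z(k_p), with the convention 0^0 = 1. -/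

import Mathlib

open PowerSeries Finset

lemma sum_antidiagonalTuple_succ {M : Type*} [AddCommMonoid M] (p n : ℕ)
    (f : (Fin (p + 1) → ℕ) → M) :
    ∑ l ∈ Finset.Nat.antidiagonalTuple (p + 1) n, f l
      = ∑ ij ∈ Finset.HasAntidiagonal.antidiagonal n, ∑ x ∈ Finset.Nat.antidiagonalTuple p ij.2,
          f (Fin.cons ij.1 x) := by
  rw [← Finset.sum_sigma (Finset.HasAntidiagonal.antidiagonal n) (fun ij => Finset.Nat.antidiagonalTuple p ij.2) (fun y => f (Fin.cons y.1.1 y.2))]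
  refine Finset.sum_nbij' (i := fun l => ⟨(l 0, ∑ i, Fin.tail l i), Fin.tail l⟩)
    (j := fun x => Fin.cons x.1.1 x.2) ?_ ?_ ?_ ?_ ?_
  · intro l hl
    rw [Finset.Nat.mem_antidiagonalTuple, Fin.sum_univ_succ] at hl
    simp [Finset.mem_sigma, Finset.Nat.mem_antidiagonalTuple, Finset.mem_antidiagonal, hl,
      Fin.tail]
  · intro x hx
    simp only [Finset.mem_sigma, Finset.HasAntidiagonal.mem_antidiagonal] at hx
    have h2 : (∑ i, x.snd i) = x.fst.2 := by
      rw [← Finset.Nat.mem_antidiagonalTuple]; exact hx.2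
    rw [Finset.Nat.mem_antidiagonalTuple, Fin.sum_univ_succ]
    simp [Fin.tail_cons, h2, hx.1]
  · intro l hl; simp [Fin.cons_self_tail]
  · intro x hx
    simp only [Finset.mem_sigma, Finset.HasAntidiagonal.mem_antidiagonal] at hx
    have h2 : (∑ i, x.snd i) = x.fst.2 := by
      rw [← Finset.Nat.mem_antidiagonalTuple]; exact hx.2
    ext1
    · simp [Fin.tail_cons, h2]
    · simp [Fin.tail_cons]
  · intro l hl; rw [Fin.cons_self_tail]

lemma coeff_pow_tuple (φ : PowerSeries ℝ) (p n : ℕ) :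
    PowerSeries.coeff n (φ ^ p)
      = ∑ l ∈ Finset.Nat.antidiagonalTuple p n, ∏ i, PowerSeries.coeff (l i) φ := by
  induction p generalizing n with
  | zero =>
    cases n with
    | zero => simp
    | succ m => simp [Finset.Nat.antidiagonalTuple_zero_succ]
  | succ p ih =>
    rw [pow_succ', PowerSeries.coeff_mul, sum_antidiagonalTuple_succ]
    refine Finset.sum_congr rfl fun ij hij => ?_
    rw [ih, Finset.mul_sum]
    refine Finset.sum_congr rfl fun x hx => ?_
    rw [Fin.prod_univ_succ]
    simp [Fin.tail_cons]

/-- The p-th star power of a lattice function expressed in terms of its values. -/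
theorem star_power_values (p : ℕ) (hp : 1 ≤ p) (ζ z : ℕ → ℝ)
    (hz : ∀ n : ℕ, z n = ∑ l ∈ Finset.range (n + 1), (Nat.descFactorial n l : ℝ) * ζ l) :
    ∀ n : ℕ,
      ∑ t ∈ Finset.range (n + 1), ∑ l ∈ Finset.Nat.antidiagonalTuple p t,
        (∏ i : Fin p, ζ (l i)) * (Nat.descFactorial n t : ℝ)
      = (Nat.factorial n : ℝ) *
          ∑ t ∈ Finset.range (n + 1), ∑ k ∈ Finset.Nat.antidiagonalTuple p t,
            (-1 : ℝ) ^ (t + n) * ((p - 1 : ℕ) : ℝ) ^ (n - t) /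
              ((∏ i : Fin p, (Nat.factorial (k i) : ℝ)) * (Nat.factorial (n - t) : ℝ)) *
              ∏ i : Fin p, z (k i) := by
  intro n
  have hfac : ∀ m : ℕ, ((Nat.factorial m : ℝ)) ≠ 0 :=
    fun m => Nat.cast_ne_zero.2 m.factorial_ne_zero
  set A : PowerSeries ℝ := PowerSeries.mk ζ with hA
  set Z : PowerSeries ℝ := PowerSeries.mk (fun k => z k / (Nat.factorial k : ℝ)) with hZdef
  have he : ∀ m : ℕ, (algebraMap ℚ ℝ) (1 / ((Nat.factorial m : ℚ))) =
      ((Nat.factorial m : ℝ))⁻¹ := by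
    intro m; simp [one_div]
  have hZ : Z = A * PowerSeries.exp ℝ := by
    ext m
    rw [hZdef, PowerSeries.coeff_mk, PowerSeries.coeff_mul,
      Finset.Nat.sum_antidiagonal_eq_sum_range_succ_mk, hz m, Finset.sum_div]
    refine Finset.sum_congr rfl fun l hl => ?_
    rw [Finset.mem_range] at hl
    have hl' : l ≤ m := Nat.lt_succ_iff.1 hl
    have hd : ((m - l).factorial : ℝ) * (Nat.descFactorial m l : ℝ) = (m.factorial : ℝ) := by
      exact_mod_cast congrArg (Nat.cast (R := ℝ)) (Nat.factorial_mul_descFactorial hl')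
    rw [hA, PowerSeries.coeff_mk, PowerSeries.coeff_exp, he]
    field_simp
    linear_combination ζ l * hd
  have key : Z ^ p * PowerSeries.rescale (-((p - 1 : ℕ) : ℝ)) (PowerSeries.exp ℝ)
      = A ^ p * PowerSeries.exp ℝ := by
    rw [hZ, mul_pow, mul_assoc, PowerSeries.exp_pow_eq_rescale_exp,
      PowerSeries.exp_mul_exp_eq_exp_add]
    have h1 : ((p : ℝ)) + (-((p - 1 : ℕ) : ℝ)) = 1 := by
      rw [Nat.cast_sub hp]; push_cast; ring
    rw [h1, PowerSeries.rescale_one]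
    simp
  have hL : ∑ t ∈ Finset.range (n + 1), ∑ l ∈ Finset.Nat.antidiagonalTuple p t,
        (∏ i : Fin p, ζ (l i)) * (Nat.descFactorial n t : ℝ)
      = (Nat.factorial n : ℝ) * PowerSeries.coeff n (A ^ p * PowerSeries.exp ℝ) := by
    rw [PowerSeries.coeff_mul, Finset.Nat.sum_antidiagonal_eq_sum_range_succ_mk,
      Finset.mul_sum]
    refine Finset.sum_congr rfl fun t ht => ?_
    rw [Finset.mem_range] at ht
    have ht' : t ≤ n := Nat.lt_succ_iff.1 ht
    have hd : ((n - t).factorial : ℝ) * (Nat.descFactorial n t : ℝ) = (n.factorial : ℝ) := by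
      exact_mod_cast congrArg (Nat.cast (R := ℝ)) (Nat.factorial_mul_descFactorial ht')
    rw [coeff_pow_tuple, PowerSeries.coeff_exp, he, ← Finset.sum_mul]
    simp_rw [hA, PowerSeries.coeff_mk]
    field_simp
    linear_combination (∑ l ∈ Finset.Nat.antidiagonalTuple p t, ∏ i : Fin p, ζ (l i)) * hd
  rw [hL, ← key, PowerSeries.coeff_mul, Finset.Nat.sum_antidiagonal_eq_sum_range_succ_mk]
  congr 1
  refine Finset.sum_congr rfl fun t ht => ?_
  rw [Finset.mem_range] at ht
  have ht' : t ≤ n := Nat.lt_succ_iff.1 ht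
  rw [coeff_pow_tuple, PowerSeries.coeff_rescale, PowerSeries.coeff_exp, he, Finset.sum_mul]
  refine Finset.sum_congr rfl fun k hk => ?_
  rw [hZdef]
  simp_rw [PowerSeries.coeff_mk]
  have hsign : ((-1 : ℝ)) ^ (t + n) = (-1 : ℝ) ^ (n - t) := by
    have h2 : t + n = (n - t) + 2 * t := by omega
    rw [h2, pow_add, pow_mul]; simp
  have hprod : ∏ i : Fin p, (z (k i) / ((k i).factorial : ℝ))
      = (∏ i : Fin p, z (k i)) / (∏ i : Fin p, ((k i).factorial : ℝ)) := by
    rw [Finset.prod_div_distrib]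
  rw [hprod, neg_pow, hsign]
  have hpf : (∏ i : Fin p, ((k i).factorial : ℝ)) ≠ 0 :=
    Finset.prod_ne_zero_iff.2 fun i _ => hfac _
  field_simp
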